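/- For all complex w and all integers L ≥ 1, |(e^{w/2} − e^{−w/2})² − 2 ∑_{ℓ=1}^{L−1} w^{2ℓ}/(2ℓ)!| ≤ (2/(2L−1)!) |w|^{2L} e^{|Re(w)|}. -/

import Mathlib

open Finset

noncomputable def expRem (N : ℕ) (z : ℂ) : ℂ :=
  Complex.exp z - ∑ n ∈ Finset.range N, z ^ n / (n.factorial : ℂ)

lemma expRem_continuous (N : ℕ) : Continuous (expRem N) := by
  unfold expRem
  exact Complex.continuous_exp.sub
    (continuous_finset_sum _ fun i _ => (continuous_pow i).div_const _)

lemma expRem_zero (N : ℕ) (hN : 1 ≤ N) : expRem N 0 = 0 := by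
  unfold expRem
  obtain ⟨M, rfl⟩ : ∃ M, N = M + 1 := ⟨N - 1, by omega⟩
  rw [Finset.sum_range_succ']
  simp [Complex.exp_zero]

lemma expRem_hasDerivAt (N : ℕ) (z : ℂ) :
    HasDerivAt (expRem (N + 1)) (expRem N z) z := by
  unfold expRem
  have h2 : HasDerivAt (fun z : ℂ => ∑ n ∈ Finset.range (N + 1), z ^ n / (n.factorial : ℂ))
      (∑ n ∈ Finset.range (N + 1), (n : ℂ) * z ^ (n - 1) / (n.factorial : ℂ)) z :=
    HasDerivAt.fun_sum fun n _ => (hasDerivAt_pow n z).div_const _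
  have hsum : ∑ n ∈ Finset.range (N + 1), (n : ℂ) * z ^ (n - 1) / (n.factorial : ℂ)
      = ∑ n ∈ Finset.range N, z ^ n / (n.factorial : ℂ) := by
    rw [Finset.sum_range_succ']
    simp only [Nat.cast_zero, zero_mul, zero_div, add_zero]
    refine Finset.sum_congr rfl fun i _ => ?_
    rw [Nat.add_sub_cancel, Nat.factorial_succ, Nat.cast_mul]
    push_cast
    rw [mul_div_mul_left _ _ (by exact_mod_cast (Nat.succ_ne_zero i) : ((i : ℂ) + 1) ≠ 0)]
  rw [hsum] at h2
  exact (Complex.hasDerivAt_exp z).sub h2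

lemma expRem_bound (w : ℂ) (N : ℕ) (t : ℝ) (ht0 : 0 ≤ t) (ht1 : t ≤ 1) :
    ‖expRem N ((t : ℂ) * w)‖ ≤ Real.exp |w.re| * ‖w‖ ^ N * t ^ N / N.factorial := by
  induction N generalizing t with
  | zero =>
    simp only [expRem, Finset.range_zero, Finset.sum_empty, sub_zero, pow_zero,
      Nat.factorial_zero, Nat.cast_one, mul_one, div_one]
    rw [Complex.norm_exp]
    apply Real.exp_le_exp.mpr
    have : ((t : ℂ) * w).re = t * w.re := by simp
    rw [this]
    calc t * w.re ≤ t * |w.re| := by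
          exact mul_le_mul_of_nonneg_left (le_abs_self _) ht0
      _ ≤ 1 * |w.re| := by
          exact mul_le_mul_of_nonneg_right ht1 (abs_nonneg _)
      _ = |w.re| := one_mul _
  | succ N ih =>
    set M := Real.exp |w.re| with hM
    have hM0 : 0 < M := Real.exp_pos _
    have hd : ∀ s : ℝ, HasDerivAt (fun s : ℝ => expRem (N + 1) ((s : ℂ) * w))
        (w * expRem N ((s : ℂ) * w)) s := by
      intro s
      have h1 : HasDerivAt (fun s : ℝ => (s : ℂ) * w) w s := by
        simpa using (Complex.ofRealCLM.hasDerivAt (x := s)).mul_const w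
      have := (expRem_hasDerivAt N ((s : ℂ) * w)).comp s h1
      simpa [mul_comm, Function.comp_def] using this
    have hcont : Continuous fun s : ℝ => w * expRem N ((s : ℂ) * w) :=
      continuous_const.mul ((expRem_continuous N).comp
        ((Complex.continuous_ofReal.mul continuous_const)))
    have hftc : ∫ s in (0:ℝ)..t, w * expRem N ((s : ℂ) * w)
        = expRem (N + 1) ((t : ℂ) * w) - expRem (N + 1) ((0 : ℂ) * w) := by
      rw [intervalIntegral.integral_eq_sub_of_hasDerivAt (fun s _ => hd s)
        (hcont.intervalIntegrable 0 t)]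
      norm_num
    have hzero : expRem (N + 1) ((0 : ℂ) * w) = 0 := by
      rw [zero_mul]; exact expRem_zero _ (Nat.succ_le_succ (Nat.zero_le N))
    have key : expRem (N + 1) ((t : ℂ) * w)
        = ∫ s in (0:ℝ)..t, w * expRem N ((s : ℂ) * w) := by
      rw [hftc, hzero, sub_zero]
    rw [key]
    have hb : ∀ s ∈ Set.Ioc (0:ℝ) t, ‖w * expRem N ((s : ℂ) * w)‖
        ≤ ‖w‖ * (M * ‖w‖ ^ N * s ^ N / N.factorial) := by
      intro s hs
      rw [norm_mul]
      exact mul_le_mul_of_nonneg_left (ih s hs.1.le (hs.2.trans ht1)) (norm_nonneg w)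
    calc ‖∫ s in (0:ℝ)..t, w * expRem N ((s : ℂ) * w)‖
        ≤ |∫ s in (0:ℝ)..t, ‖w‖ * (M * ‖w‖ ^ N * s ^ N / N.factorial)| := by
          apply intervalIntegral.norm_integral_le_abs_of_norm_le
          · filter_upwards [MeasureTheory.ae_restrict_mem measurableSet_Ioc] with s hs
            rw [Set.uIoc_of_le ht0] at hs
            exact hb s hs
          · exact Continuous.intervalIntegrable
              (continuous_const.mul ((continuous_const.mul
                (continuous_pow N)).div_const _)) 0 t
      _ = ∫ s in (0:ℝ)..t, ‖w‖ * (M * ‖w‖ ^ N * s ^ N / N.factorial) := by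
          apply abs_of_nonneg
          apply intervalIntegral.integral_nonneg ht0
          intro s hs
          have hsN : (0:ℝ) ≤ s ^ N := pow_nonneg hs.1 N
          positivity
      _ = ‖w‖ * (M * ‖w‖ ^ N / N.factorial) * (t ^ (N + 1) / (N + 1)) := by
          have : ∀ s : ℝ, ‖w‖ * (M * ‖w‖ ^ N * s ^ N / N.factorial)
              = (‖w‖ * (M * ‖w‖ ^ N / N.factorial)) * s ^ N := by
            intro s; ring
          simp_rw [this]
          rw [intervalIntegral.integral_const_mul, integral_pow]
          ring
      _ = M * ‖w‖ ^ (N + 1) * t ^ (N + 1) / (N + 1).factorial := by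
          have h1 : (N.factorial : ℝ) ≠ 0 := by positivity
          have h2 : ((N : ℝ) + 1) ≠ 0 := by positivity
          rw [Nat.factorial_succ, pow_succ]
          push_cast
          field_simp
          ring

lemma sum_even_split (w : ℂ) (L : ℕ) :
    ∑ n ∈ Finset.range (2 * L), (w ^ n + (-w) ^ n) / (n.factorial : ℂ)
      = 2 * ∑ ℓ ∈ Finset.range L, w ^ (2 * ℓ) / ((2 * ℓ).factorial : ℂ) := by
  induction L with
  | zero => simp
  | succ L ih =>
    have h2 : 2 * (L + 1) = (2 * L + 1) + 1 := by ring
    rw [h2, Finset.sum_range_succ, Finset.sum_range_succ, ih, Finset.sum_range_succ]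
    have heven : (-w) ^ (2 * L) = w ^ (2 * L) := (Even.neg_pow (even_two_mul L) w)
    have hodd : (-w) ^ (2 * L + 1) = -(w ^ (2 * L + 1)) :=
      Odd.neg_pow ⟨L, by ring⟩ w
    rw [heven, hodd]
    ring

theorem sinh_sq_taylor_error (w : ℂ) (L : ℕ) (hL : 1 ≤ L) :
    ‖(Complex.exp (w / 2) - Complex.exp (-w / 2)) ^ 2 -
        2 * ∑ ℓ ∈ Finset.Icc 1 (L - 1), w ^ (2 * ℓ) / ((2 * ℓ).factorial : ℂ)‖ ≤
      2 / ((2 * L - 1).factorial : ℝ) * ‖w‖ ^ (2 * L) * Real.exp |w.re| := by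
  obtain ⟨K, rfl⟩ := Nat.exists_eq_add_of_le hL
  set L := 1 + K with hLdef
  -- algebraic identity
  have hsq : (Complex.exp (w / 2) - Complex.exp (-w / 2)) ^ 2
      = Complex.exp w + Complex.exp (-w) - 2 := by
    have e1 : Complex.exp (w / 2) * Complex.exp (w / 2) = Complex.exp w := by
      rw [← Complex.exp_add]; ring_nf
    have e2 : Complex.exp (-w / 2) * Complex.exp (-w / 2) = Complex.exp (-w) := by
      rw [← Complex.exp_add]; ring_nf
    have e3 : Complex.exp (w / 2) * Complex.exp (-w / 2) = 1 := by
      rw [← Complex.exp_add]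
      have : w / 2 + -w / 2 = 0 := by ring
      rw [this, Complex.exp_zero]
    have : (Complex.exp (w / 2) - Complex.exp (-w / 2)) ^ 2
        = Complex.exp (w / 2) * Complex.exp (w / 2)
          - 2 * (Complex.exp (w / 2) * Complex.exp (-w / 2))
          + Complex.exp (-w / 2) * Complex.exp (-w / 2) := by ring
    rw [this, e1, e2, e3]; ring
  -- sum identity
  have hIcc : ∑ ℓ ∈ Finset.range L, w ^ (2 * ℓ) / ((2 * ℓ).factorial : ℂ)
      = 1 + ∑ ℓ ∈ Finset.Icc 1 (L - 1), w ^ (2 * ℓ) / ((2 * ℓ).factorial : ℂ) := by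
    have hL1 : L = K + 1 := by omega
    rw [hL1]
    rw [Finset.sum_range_succ']
    have : Finset.Icc 1 (K + 1 - 1) = Finset.Ico 1 (K + 1) := by
      rw [Nat.add_sub_cancel, Finset.Ico_add_one_right_eq_Icc]
    rw [this, Finset.sum_Ico_eq_sum_range]
    simp [add_comm]
  have hmain : (Complex.exp (w / 2) - Complex.exp (-w / 2)) ^ 2 -
        2 * ∑ ℓ ∈ Finset.Icc 1 (L - 1), w ^ (2 * ℓ) / ((2 * ℓ).factorial : ℂ)
      = expRem (2 * L) w + expRem (2 * L) (-w) := by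
    rw [hsq]
    unfold expRem
    have := sum_even_split w L
    have hsplit : ∑ n ∈ Finset.range (2 * L), w ^ n / (n.factorial : ℂ)
        + ∑ n ∈ Finset.range (2 * L), (-w) ^ n / (n.factorial : ℂ)
        = 2 * ∑ ℓ ∈ Finset.range L, w ^ (2 * ℓ) / ((2 * ℓ).factorial : ℂ) := by
      rw [← this, ← Finset.sum_add_distrib]
      exact Finset.sum_congr rfl fun n _ => by rw [add_div]
    have h2 : (2 : ℂ) * ∑ ℓ ∈ Finset.range L, w ^ (2 * ℓ) / ((2 * ℓ).factorial : ℂ)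
        = 2 + 2 * ∑ ℓ ∈ Finset.Icc 1 (L - 1), w ^ (2 * ℓ) / ((2 * ℓ).factorial : ℂ) := by
      rw [hIcc]; ring
    rw [h2] at hsplit
    have := hsplit
    linear_combination this
  rw [hmain]
  have hb1 : ‖expRem (2 * L) w‖ ≤ Real.exp |w.re| * ‖w‖ ^ (2 * L) / (2 * L).factorial := by
    have := expRem_bound w (2 * L) 1 zero_le_one le_rfl
    simpa using this
  have hb2 : ‖expRem (2 * L) (-w)‖ ≤ Real.exp |w.re| * ‖w‖ ^ (2 * L) / (2 * L).factorial := by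
    have := expRem_bound (-w) (2 * L) 1 zero_le_one le_rfl
    simpa [abs_neg] using this
  have htri := norm_add_le (expRem (2 * L) w) (expRem (2 * L) (-w))
  have hfact : ((2 * L - 1).factorial : ℝ) ≤ ((2 * L).factorial : ℝ) := by
    exact_mod_cast Nat.factorial_le (by omega)
  have hfact0 : (0:ℝ) < ((2 * L - 1).factorial : ℝ) := by positivity
  have hfact0' : (0:ℝ) < ((2 * L).factorial : ℝ) := by positivity
  calc ‖expRem (2 * L) w + expRem (2 * L) (-w)‖
      ≤ 2 * (Real.exp |w.re| * ‖w‖ ^ (2 * L) / (2 * L).factorial) := by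
        linarith
    _ = 2 / ((2 * L).factorial : ℝ) * ‖w‖ ^ (2 * L) * Real.exp |w.re| := by ring
    _ ≤ 2 / ((2 * L - 1).factorial : ℝ) * ‖w‖ ^ (2 * L) * Real.exp |w.re| := by
        gcongr
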